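/- Let G be a graph on vertices {1,…,n} and suppose vertex 1 belongs to at least two distinct maximal cliques of G. Let E be the n×n matrix with 1 in entry (1,1) and 0 elsewhere. Then E generates an extreme ray of the cone S*(G) = {A ∈ S(G) : A_C ⪰ 0 for all cliques C of G}; that is, whenever X, Y ∈ S*(G) satisfy X + Y = αE with α ≥ 0, both X and Y are nonnegative multiples of E. -/

import Mathlib

/-- The principal submatrix of `A` indexed by a finite set `C` of vertices. -/
def sub {n : ℕ} (A : Matrix (Fin n) (Fin n) ℝ) (C : Finset (Fin n)) :
    Matrix C C ℝ :=
  A.submatrix (fun i : C => (i : Fin n)) (fun j : C => (j : Fin n))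

/-- Membership in the cone `S*(G)`: a symmetric matrix supported on `G` all of whose
clique-indexed principal submatrices are positive semidefinite. -/
def MemSStar {n : ℕ} (G : SimpleGraph (Fin n)) (A : Matrix (Fin n) (Fin n) ℝ) : Prop :=
  A.IsSymm ∧ (∀ i j : Fin n, i ≠ j → ¬ G.Adj i j → A i j = 0) ∧
    ∀ C : Finset (Fin n), G.IsClique (↑C : Set (Fin n)) → (sub A C).PosSemidef


lemma psd_diag_nonneg {m : Type*} [Fintype m] [DecidableEq m] {M : Matrix m m ℝ}
    (h : M.PosSemidef) (i : m) : 0 ≤ M i i := by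
  simpa [dotProduct, Matrix.mulVec_single, Pi.single_apply] using (Matrix.posSemidef_iff_dotProduct_mulVec.mp h).2 (Pi.single i 1)

lemma psd_col_zero {m : Type*} [Fintype m] [DecidableEq m] {M : Matrix m m ℝ}
    (h : M.PosSemidef) {j : m} (hj : M j j = 0) (i : m) : M i j = 0 := by
  have h0 : dotProduct (star (Pi.single j 1 : m → ℝ)) (Matrix.mulVec M (Pi.single j 1)) = 0 := by
    simpa [dotProduct, Matrix.mulVec_single, Pi.single_apply] using hj
  have := congrFun ((h.dotProduct_mulVec_zero_iff (Pi.single j 1)).mp h0) i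
  simpa [Matrix.mulVec_single] using this


lemma sstar_diag_nonneg {n : ℕ} {G : SimpleGraph (Fin n)} {A : Matrix (Fin n) (Fin n) ℝ}
    (hA : MemSStar G A) (i : Fin n) : 0 ≤ A i i := by
  have hc : G.IsClique (↑({i} : Finset (Fin n)) : Set (Fin n)) := by
    simp [SimpleGraph.isClique_singleton]
  have := psd_diag_nonneg (hA.2.2 {i} hc) ⟨i, by simp⟩
  simpa [sub] using this

lemma sstar_off_zero {n : ℕ} {G : SimpleGraph (Fin n)} {A : Matrix (Fin n) (Fin n) ℝ}
    (hA : MemSStar G A) {i j : Fin n} (hij : i ≠ j) (hj : A j j = 0) : A i j = 0 := by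
  by_cases hadj : G.Adj i j
  · have hc : G.IsClique (↑({i, j} : Finset (Fin n)) : Set (Fin n)) := by
      rw [Finset.coe_insert, Finset.coe_singleton]
      exact SimpleGraph.isClique_pair.mpr (fun _ => hadj)
    have hpsd := hA.2.2 {i, j} hc
    have := psd_col_zero hpsd (j := ⟨j, by simp⟩) (by simpa [sub] using hj) ⟨i, by simp⟩
    simpa [sub] using this
  · exact hA.2.1 i j hij hadj

lemma key {n : ℕ} (hn : 0 < n) {G : SimpleGraph (Fin n)} {A : Matrix (Fin n) (Fin n) ℝ}
    (hA : MemSStar G A) (hdiag : ∀ i : Fin n, i ≠ (⟨0, hn⟩ : Fin n) → A i i = 0) :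
    A = A ⟨0, hn⟩ ⟨0, hn⟩ •
      Matrix.single (⟨0, hn⟩ : Fin n) (⟨0, hn⟩ : Fin n) (1 : ℝ) := by
  set z : Fin n := ⟨0, hn⟩ with hz
  ext i j
  by_cases hj : j = z
  · subst hj
    by_cases hi : i = z
    · subst hi; simp [Matrix.single]
    · have h1 : A z i = 0 := sstar_off_zero hA (Ne.symm hi) (hdiag i hi)
      have hs : A i z = A z i := (hA.1.apply z i)
      rw [hs, h1]
      simp [Matrix.single, Ne.symm hi]
  · have h0 : A i j = 0 := by
      by_cases hij : i = j
      · subst hij; exact hdiag i hj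
      · exact sstar_off_zero hA hij (hdiag j hj)
    rw [h0]
    simp only [Matrix.smul_apply, Matrix.single, Matrix.of_apply, smul_eq_mul]
    rw [if_neg (fun h => hj (h.2.symm)), mul_zero]

theorem stmt_9' {n : ℕ} (hn : 0 < n) (G : SimpleGraph (Fin n))
    (E : Matrix (Fin n) (Fin n) ℝ)
    (hE : E = Matrix.single (⟨0, hn⟩ : Fin n) (⟨0, hn⟩ : Fin n) (1 : ℝ)) :
    ∀ X Y : Matrix (Fin n) (Fin n) ℝ, MemSStar G X → MemSStar G Y →
      ∀ α : ℝ, 0 ≤ α → X + Y = α • E →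
        (∃ β : ℝ, 0 ≤ β ∧ X = β • E) ∧ (∃ γ : ℝ, 0 ≤ γ ∧ Y = γ • E) := by
  intro X Y hX hY α hα hsum
  set z : Fin n := ⟨0, hn⟩ with hz
  have hdiag : ∀ i : Fin n, i ≠ z → X i i = 0 ∧ Y i i = 0 := by
    intro i hi
    have h1 := congrFun (congrFun hsum i) i
    have hE0 : E i i = 0 := by simp [hE, Matrix.single, Ne.symm hi]
    have h2 : X i i + Y i i = 0 := by simpa [hE0] using h1
    have h3 := sstar_diag_nonneg hX i
    have h4 := sstar_diag_nonneg hY i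
    constructor <;> linarith
  refine ⟨⟨X z z, sstar_diag_nonneg hX z, ?_⟩, ⟨Y z z, sstar_diag_nonneg hY z, ?_⟩⟩
  · rw [hE]; exact key hn hX (fun i hi => (hdiag i hi).1)
  · rw [hE]; exact key hn hY (fun i hi => (hdiag i hi).2)

/-- A maximal clique of a graph. -/
def IsMaxClique {V : Type*} (G : SimpleGraph V) (s : Finset V) : Prop :=
  G.IsClique (↑s : Set V) ∧ ∀ t : Finset V, G.IsClique (↑t : Set V) → s ⊆ t → s = t

/-- If the first vertex lies in two distinct maximal cliques, the matrix unit `E₁₁`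
generates an extreme ray of `S*(G)`. -/
theorem stmt_9 {n : ℕ} (hn : 0 < n) (G : SimpleGraph (Fin n))
    (C₁ C₂ : Finset (Fin n)) (h₁ : IsMaxClique G C₁) (h₂ : IsMaxClique G C₂)
    (hne : C₁ ≠ C₂) (hv₁ : (⟨0, hn⟩ : Fin n) ∈ C₁) (hv₂ : (⟨0, hn⟩ : Fin n) ∈ C₂)
    (E : Matrix (Fin n) (Fin n) ℝ)
    (hE : E = Matrix.single (⟨0, hn⟩ : Fin n) (⟨0, hn⟩ : Fin n) (1 : ℝ)) :
    ∀ X Y : Matrix (Fin n) (Fin n) ℝ, MemSStar G X → MemSStar G Y →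
      ∀ α : ℝ, 0 ≤ α → X + Y = α • E →
        (∃ β : ℝ, 0 ≤ β ∧ X = β • E) ∧ (∃ γ : ℝ, 0 ≤ γ ∧ Y = γ • E) := by
  exact stmt_9' hn G E hE
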